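/- Let V : X → ℝ and Ṽ : X̃ → ℝ be value functions for two players' games, let κ, ξ ≥ 0, and suppose: (i) for every strategy χ_i there exists a 'restricted' strategy χ̂_i with V_i(χ_i, χ*_{-i}) ≤ V_i(χ̂_i, χ*_{-i}) + κ; (ii) every restricted strategy profile χ̂ satisfies |V_i(χ̂) − Ṽ_i(χ̂^ℓ)| ≤ ξ where χ̂ = L(χ̂^ℓ) for a lifting map L; (iii) χ^{*,ℓ} is a Nash equilibrium of the game with values Ṽ, i.e., Ṽ_i(χ̂_i^ℓ, χ^{*,ℓ}_{-i}) ≤ Ṽ_i(χ^{*,ℓ}) for all deviations. Then χ* := L(χ^{*,ℓ}) satisfies V_i(χ_i, χ*_{-i}) ≤ V_i(χ*) + κ + 2ξ for all χ_i, i.e., χ* is a (κ+2ξ)-Nash equilibrium. -/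
import Mathlib

theorem eps_nash_transfer {ι : Type*} [DecidableEq ι]
    (X Xℓ : ι → Type*)
    (L : ∀ i, Xℓ i → X i)
    (V : (∀ i, X i) → ι → ℝ) (Vt : (∀ i, Xℓ i) → ι → ℝ)
    (κ ξ : ℝ) (hκ : 0 ≤ κ) (hξ : 0 ≤ ξ)
    (χstarℓ : ∀ i, Xℓ i)
    -- (i) restriction loss: any deviation is nearly matched by a restricted deviation
    (hrestrict : ∀ (i : ι) (χi : X i), ∃ χhatℓ : Xℓ i,
      V (Function.update (fun j => L j (χstarℓ j)) i χi) i ≤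
        V (Function.update (fun j => L j (χstarℓ j)) i (L i χhatℓ)) i + κ)
    -- (ii) value approximation between lifted profiles and truncated profiles
    (happrox : ∀ (χℓ : ∀ i, Xℓ i) (i : ι),
      |V (fun j => L j (χℓ j)) i - Vt χℓ i| ≤ ξ)
    -- (iii) χ^{*,ℓ} is a Nash equilibrium of the truncated game
    (hnash : ∀ (i : ι) (χℓi : Xℓ i),
      Vt (Function.update χstarℓ i χℓi) i ≤ Vt χstarℓ i) :
    ∀ (i : ι) (χi : X i),
      V (Function.update (fun j => L j (χstarℓ j)) i χi) i ≤
        V (fun j => L j (χstarℓ j)) i + κ + 2 * ξ := by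
  intro i χi
  obtain ⟨χhatℓ, h1⟩ := hrestrict i χi
  have hkey : (Function.update (fun j => L j (χstarℓ j)) i (L i χhatℓ)) =
      (fun j => L j (Function.update χstarℓ i χhatℓ j)) := by
    funext j
    by_cases h : j = i
    · subst h; simp
    · simp [Function.update_of_ne h]
  have h2 := happrox (Function.update χstarℓ i χhatℓ) i
  have h3 := hnash i χhatℓ
  have h4 := happrox χstarℓ i
  rw [hkey] at h1
  rw [abs_le] at h2 h4
  linarith [h2.1, h2.2, h4.1, h4.2]
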